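/- Let f and g be entire functions of finite order, and let α₁, α₂ ∈ [0, 2π) be such that α₁ − α₂ is not a rational multiple of π. If |g(x·e^{iα₁})| = |f(x·e^{iα₁})| and |g(x·e^{iα₂})| = |f(x·e^{iα₂})| for all real x, then there exists a constant c ∈ ℂ with |c| = 1 such that g = c·f. -/

import Mathlib

open Complex Filter Topology

local notation "cj" => starRingEnd ℂ

lemma diffConjConj {F : ℂ → ℂ} (hF : Differentiable ℂ F) :
    Differentiable ℂ fun z => cj (F (cj z)) := by
  intro z
  have h : HasDerivAt F (deriv F (cj z)) (cj z) := (hF _).hasDerivAt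
  have key : HasDerivAt (fun w => cj (F (cj w))) (cj (deriv F (cj z))) z := by
    rw [hasDerivAt_iff_tendsto] at h ⊢
    have hc : Tendsto (fun w : ℂ => cj w) (𝓝 z) (𝓝 (cj z)) :=
      (Complex.continuous_conj).tendsto z
    have h2 := h.comp hc
    have heq : (fun w => ‖w - z‖⁻¹ * ‖cj (F (cj w)) - cj (F (cj z)) - (w - z) • cj (deriv F (cj z))‖)
        = (fun w' => ‖w' - cj z‖⁻¹ * ‖F w' - F (cj z) - (w' - cj z) • deriv F (cj z)‖) ∘ (fun w : ℂ => cj w) := by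
      funext w
      have e1 : cj (F (cj w)) - cj (F (cj z)) - (w - z) • cj (deriv F (cj z))
          = cj (F (cj w) - F (cj z) - (cj w - cj z) • deriv F (cj z)) := by
        simp [smul_eq_mul, map_sub, map_mul]
      have e2 : ‖w - z‖ = ‖cj w - cj z‖ := by
        rw [← map_sub, RCLike.norm_conj]
      simp only [Function.comp, e1, e2, RCLike.norm_conj]
    rw [heq]
    exact h2
  exact key.differentiableAt

lemma entireEqOfFrequently {F G : ℂ → ℂ} (hF : Differentiable ℂ F) (hG : Differentiable ℂ G)
    (z₀ : ℂ) (h : ∃ᶠ z in 𝓝[≠] z₀, F z = G z) : F = G := by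
  funext z
  exact (hF.differentiableOn.analyticOnNhd isOpen_univ).eqOn_of_preconnected_of_frequently_eq
    (hG.differentiableOn.analyticOnNhd isOpen_univ) isPreconnected_univ (Set.mem_univ z₀) h
    (Set.mem_univ z)

lemma eqZeroOfMulZero {D E : ℂ → ℂ} (hD : Continuous D) (hE : Differentiable ℂ E)
    (hE0 : ∃ w, E w ≠ 0) (h : ∀ z, D z * E z = 0) : ∀ z, D z = 0 := by
  intro z
  have hev : ∀ᶠ x in 𝓝[≠] z, E x ≠ 0 := by
    by_contra hc
    have hfr : ∃ᶠ x in 𝓝[≠] z, E x = 0 := by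
      simpa [Filter.not_eventually, not_not] using hc
    have : E = fun _ => (0:ℂ) :=
      entireEqOfFrequently hE (differentiable_const 0) z (by simpa using hfr)
    obtain ⟨w, hw⟩ := hE0
    exact hw (by rw [this])
  have hfrD : ∃ᶠ x in 𝓝[≠] z, D x = 0 := by
    refine (hev.mono ?_).frequently
    intro x hx
    rcases mul_eq_zero.mp (h x) with h0 | h0
    · exact h0
    · exact absurd h0 hx
  have ht : Tendsto D (𝓝[≠] z) (𝓝 (D z)) := (hD.tendsto z).mono_left nhdsWithin_le_nhds
  exact tendsto_nhds_unique_of_frequently_eq ht tendsto_const_nhds hfrD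

lemma entireEqOfLine {F G : ℂ → ℂ} (hF : Differentiable ℂ F) (hG : Differentiable ℂ G)
    {e : ℂ} (he : e ≠ 0) (h : ∀ x : ℝ, x ≠ 0 → F ((x:ℂ) * e) = G ((x:ℂ) * e)) : F = G := by
  apply entireEqOfFrequently hF hG 0
  have hu : Tendsto (fun n : ℕ => ((1:ℝ)/(n+1) : ℝ) * e : ℕ → ℂ) atTop (𝓝[≠] (0:ℂ)) := by
    rw [tendsto_nhdsWithin_iff]
    constructor
    · have : Tendsto (fun n : ℕ => ((1:ℝ)/(n+1) : ℂ)) atTop (𝓝 0) := by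
        have : Tendsto (fun n : ℕ => 1 / ((n : ℝ) + 1)) atTop (𝓝 0) :=
          tendsto_one_div_add_atTop_nhds_zero_nat
        have h2 : Tendsto (fun n : ℕ => (((1:ℝ)/(n+1) : ℝ) : ℂ)) atTop (𝓝 ((0:ℝ):ℂ)) :=
          (Complex.continuous_ofReal.tendsto 0).comp this
        simpa using h2
      simpa using this.mul_const e
    · filter_upwards with n
      simp only [Set.mem_compl_iff, Set.mem_singleton_iff]
      refine mul_ne_zero ?_ he
      simp only [ne_eq, Complex.ofReal_eq_zero]
      positivity
  apply hu.frequently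
  refine Filter.Frequently.of_forall fun n => ?_
  exact h _ (by positivity)

lemma conj_line (α : ℝ) (x : ℝ) :
    cj ((x:ℂ) * Complex.exp (Complex.I * α)) = (x:ℂ) * Complex.exp (-(Complex.I * α)) := by
  rw [map_mul, Complex.conj_ofReal, ← Complex.exp_conj]
  congr 1
  rw [map_mul, Complex.conj_I, Complex.conj_ofReal]
  ring

lemma sigma_line (α : ℝ) (x : ℝ) :
    Complex.exp (Complex.I * ((2*α : ℝ):ℂ)) * cj ((x:ℂ) * Complex.exp (Complex.I * α))
      = (x:ℂ) * Complex.exp (Complex.I * α) := by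
  rw [conj_line]
  rw [mul_comm ((x:ℂ)) (Complex.exp (-(Complex.I * α))), ← mul_assoc, ← Complex.exp_add]
  have : Complex.I * ((2*α : ℝ):ℂ) + -(Complex.I * α) = Complex.I * α := by
    push_cast; ring
  rw [this]; ring

lemma stepA {f g : ℂ → ℂ} (hf : Differentiable ℂ f) (hg : Differentiable ℂ g) (α : ℝ)
    (heq : ∀ x : ℝ, ‖g ((x:ℂ) * Complex.exp (Complex.I * α))‖
        = ‖f ((x:ℂ) * Complex.exp (Complex.I * α))‖) :
    ∀ z, g z * cj (g (Complex.exp (Complex.I * ((2*α : ℝ):ℂ)) * cj z))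
      = f z * cj (f (Complex.exp (Complex.I * ((2*α : ℝ):ℂ)) * cj z)) := by
  set σ := Complex.exp (Complex.I * ((2*α : ℝ):ℂ)) with hσ
  have hgd : Differentiable ℂ (fun w => g (σ * w)) :=
    hg.comp ((differentiable_const σ).mul differentiable_id)
  have hfd : Differentiable ℂ (fun w => f (σ * w)) :=
    hf.comp ((differentiable_const σ).mul differentiable_id)
  have hP : Differentiable ℂ (fun z => g z * cj (g (σ * cj z))) := hg.mul (diffConjConj hgd)
  have hQ : Differentiable ℂ (fun z => f z * cj (f (σ * cj z))) := hf.mul (diffConjConj hfd)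
  have key : (fun z => g z * cj (g (σ * cj z))) = (fun z => f z * cj (f (σ * cj z))) := by
    apply entireEqOfLine hP hQ (Complex.exp_ne_zero (Complex.I * α))
    intro x hx
    have hline := sigma_line α x
    rw [← hσ] at hline
    simp only [hline, Complex.mul_conj, Complex.normSq_eq_norm_sq, heq x]
  exact fun z => congrFun key z

/-- An entire function has finite order if `max_{|z|=r} |f z| ≤ exp (r^λ)` for some
`λ ≥ 0` and all sufficiently large `r`. -/
def FiniteOrder (f : ℂ → ℂ) : Prop :=
  ∃ lam : ℝ, 0 ≤ lam ∧ ∃ R : ℝ, ∀ z : ℂ, R ≤ ‖z‖ →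
    ‖f z‖ ≤ Real.exp (‖z‖ ^ lam)

/-- Theorem 3.2: an entire function of finite order is determined, up to a unimodular
constant, by its modulus on two lines through the origin making an angle which is an
irrational multiple of `π`. -/
theorem entire_determined_by_modulus_on_two_lines
    (f g : ℂ → ℂ) (hf : Differentiable ℂ f) (hg : Differentiable ℂ g)
    (hfo : FiniteOrder f) (hgo : FiniteOrder g)
    (α₁ α₂ : ℝ) (hα₁ : α₁ ∈ Set.Ico (0:ℝ) (2 * Real.pi))
    (hα₂ : α₂ ∈ Set.Ico (0:ℝ) (2 * Real.pi))
    (hirr : ∀ q : ℚ, α₁ - α₂ ≠ (q : ℝ) * Real.pi)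
    (heq1 : ∀ x : ℝ, ‖g ((x : ℂ) * Complex.exp (Complex.I * α₁))‖
        = ‖f ((x : ℂ) * Complex.exp (Complex.I * α₁))‖)
    (heq2 : ∀ x : ℝ, ‖g ((x : ℂ) * Complex.exp (Complex.I * α₂))‖
        = ‖f ((x : ℂ) * Complex.exp (Complex.I * α₂))‖) :
    ∃ c : ℂ, ‖c‖ = 1 ∧ g = fun z => c * f z := by
  classical
  set e₁ : ℂ := Complex.exp (Complex.I * α₁) with he₁def
  have he₁ : e₁ ≠ 0 := Complex.exp_ne_zero _
  by_cases hfz : ∀ x : ℝ, x ≠ 0 → f ((x:ℂ) * e₁) = 0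
  · -- degenerate case: f ≡ 0
    have hfzero : f = fun _ => (0:ℂ) :=
      entireEqOfLine hf (differentiable_const 0) he₁ (fun x hx => hfz x hx)
    have hgzero : g = fun _ => (0:ℂ) := by
      refine entireEqOfLine hg (differentiable_const 0) he₁ (fun x hx => ?_)
      have h1 := heq1 x
      rw [hfzero] at h1
      simpa using norm_eq_zero.mp (by simpa using h1)
    exact ⟨1, by simp, by funext z; rw [hfzero, hgzero]; simp⟩
  push_neg at hfz
  obtain ⟨x₀, hx₀ne, hfx₀⟩ := hfz
  set z₀ : ℂ := (x₀:ℂ) * e₁ with hz₀def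
  have hz₀ : z₀ ≠ 0 := mul_ne_zero (by exact_mod_cast hx₀ne) he₁
  have hgx₀ : g z₀ ≠ 0 := by
    intro h0
    apply hfx₀
    have h1 := heq1 x₀
    rw [show ((x₀:ℂ) * e₁) = z₀ from rfl, h0] at h1
    exact norm_eq_zero.mp (by simpa using h1.symm)
  -- the two rotation constants and ρ
  set σ₁ : ℂ := Complex.exp (Complex.I * ((2*α₁ : ℝ):ℂ)) with hσ₁def
  set σ₂ : ℂ := Complex.exp (Complex.I * ((2*α₂ : ℝ):ℂ)) with hσ₂def
  set ρ : ℂ := Complex.exp (Complex.I * ((2*α₂ - 2*α₁ : ℝ):ℂ)) with hρdef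
  have hρ0 : ρ ≠ 0 := Complex.exp_ne_zero _
  have hA1 := stepA hf hg α₁ heq1
  have hA2 := stepA hf hg α₂ heq2
  rw [← hσ₁def] at hA1
  rw [← hσ₂def] at hA2
  have hσρ : ∀ z : ℂ, σ₂ * cj (ρ * z) = σ₁ * cj z := by
    intro z
    rw [map_mul, ← mul_assoc]
    congr 1
    rw [hσ₂def, hρdef, ← Complex.exp_conj, ← Complex.exp_add, hσ₁def]
    congr 1
    rw [map_mul, Complex.conj_I, Complex.conj_ofReal]
    push_cast; ring
  -- Step B : g z * f (ρ z) = f z * g (ρ z)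
  have hB : ∀ z, g z * f (ρ * z) = f z * g (ρ * z) := by
    have hB0 : ∀ z, (g z * f (ρ*z) - f z * g (ρ*z)) * cj (g (σ₁ * cj z) * f (σ₁ * cj z)) = 0 := by
      intro z
      have h1 := hA1 z
      have h2 := hA2 (ρ*z)
      rw [hσρ z] at h2
      rw [map_mul]
      linear_combination (f (ρ*z) * cj (f (σ₁ * cj z))) * h1 - (f z * cj (f (σ₁ * cj z))) * h2
    have hB0' : ∀ w, cj (g (cj w) * f (ρ * cj w) - f (cj w) * g (ρ * cj w))
        * (g (σ₁ * w) * f (σ₁ * w)) = 0 := by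
      intro w
      have h := hB0 (cj w)
      rw [Complex.conj_conj] at h
      have h2 := congrArg cj h
      rw [map_mul, map_zero, Complex.conj_conj] at h2
      exact h2
    have hcont : Continuous fun w => cj (g (cj w) * f (ρ * cj w) - f (cj w) * g (ρ * cj w)) := by
      apply Complex.continuous_conj.comp
      exact ((hg.continuous.comp Complex.continuous_conj).mul
          (hf.continuous.comp (continuous_const.mul Complex.continuous_conj))).sub
        ((hf.continuous.comp Complex.continuous_conj).mul
          (hg.continuous.comp (continuous_const.mul Complex.continuous_conj)))
    have hE : Differentiable ℂ fun w => g (σ₁ * w) * f (σ₁ * w) :=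
      (hg.comp ((differentiable_const σ₁).mul differentiable_id)).mul
        (hf.comp ((differentiable_const σ₁).mul differentiable_id))
    have hE0 : ∃ w, g (σ₁ * w) * f (σ₁ * w) ≠ 0 := by
      refine ⟨σ₁⁻¹ * z₀, ?_⟩
      rw [← mul_assoc, mul_inv_cancel₀ (Complex.exp_ne_zero _), one_mul]
      exact mul_ne_zero hgx₀ hfx₀
    have hzero := eqZeroOfMulZero hcont hE hE0 hB0'
    intro z
    have h := hzero (cj z)
    rw [Complex.conj_conj] at h
    have h' : g z * f (ρ * z) - f z * g (ρ * z) = 0 := by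
      have := congrArg cj h
      rwa [Complex.conj_conj, map_zero] at this
    exact sub_eq_zero.mp h'
  -- Step C : iterate to all powers of ρ
  have hC : ∀ n : ℕ, ∀ z, g z * f (ρ^n * z) = f z * g (ρ^n * z) := by
    intro n
    induction n with
    | zero => intro z; simp only [pow_zero, one_mul]; ring
    | succ n ih =>
      have hkey : ∀ z, (g z * f (ρ^(n+1)*z) - f z * g (ρ^(n+1)*z)) * (f (ρ^n*z) * g (ρ^n*z)) = 0 := by
        intro z
        have h1 := ih z
        have h2 := hB (ρ^n*z)
        have hρm : ρ * (ρ^n*z) = ρ^(n+1)*z := by ring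
        rw [hρm] at h2
        linear_combination (f (ρ^(n+1)*z) * g (ρ^n*z)) * h1 + (f z * g (ρ^n*z)) * h2
      have hcont : Continuous fun z => g z * f (ρ^(n+1)*z) - f z * g (ρ^(n+1)*z) :=
        (hg.continuous.mul (hf.continuous.comp (continuous_const.mul continuous_id))).sub
          (hf.continuous.mul (hg.continuous.comp (continuous_const.mul continuous_id)))
      have hE : Differentiable ℂ fun z => f (ρ^n*z) * g (ρ^n*z) :=
        (hf.comp ((differentiable_const _).mul differentiable_id)).mul
          (hg.comp ((differentiable_const _).mul differentiable_id))
      have hE0 : ∃ w, f (ρ^n*w) * g (ρ^n*w) ≠ 0 := by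
        refine ⟨(ρ^n)⁻¹ * z₀, ?_⟩
        rw [← mul_assoc, mul_inv_cancel₀ (pow_ne_zero _ hρ0), one_mul]
        exact mul_ne_zero hfx₀ hgx₀
      intro z
      exact sub_eq_zero.mp (eqZeroOfMulZero hcont hE hE0 hkey z)
  -- ρ is not a root of unity
  have hρpow : ∀ k : ℕ, 0 < k → ρ^k ≠ 1 := by
    intro k hk hcon
    rw [hρdef, ← Complex.exp_nat_mul, Complex.exp_eq_one_iff] at hcon
    obtain ⟨m, hm⟩ := hcon
    have hre : (k:ℝ) * (2*α₂ - 2*α₁) = m * (2*Real.pi) := by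
      have him := congrArg Complex.im hm
      simpa using him
    have hk0 : (k:ℝ) ≠ 0 := by positivity
    apply hirr (-(m:ℚ)/k)
    have hcast : ((-(m:ℚ)/k : ℚ) : ℝ) = -(m:ℝ)/(k:ℝ) := by push_cast; ring
    rw [hcast, div_mul_eq_mul_div, eq_div_iff hk0]
    nlinarith [hre]
  -- injectivity of n ↦ ρ^n z₀
  have huinj : Function.Injective (fun n : ℕ => ρ^n * z₀) := by
    intro n m hnm
    have hpow : ρ^n = ρ^m := mul_right_cancel₀ hz₀ hnm
    have key : ∀ a b : ℕ, a < b → ρ^a = ρ^b → False := by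
      intro a b hab he
      have h1 : ρ^a * ρ^(b-a) = ρ^a * 1 := by
        rw [mul_one, ← pow_add, he]
        congr 1
        omega
      exact hρpow (b-a) (by omega) (mul_left_cancel₀ (pow_ne_zero a hρ0) h1)
    rcases lt_trichotomy n m with h | h | h
    · exact (key n m h hpow).elim
    · exact h
    · exact (key m n h hpow.symm).elim
  -- accumulation point of the orbit on the circle
  have habsρ : ‖ρ‖ = 1 := by
    rw [hρdef, Complex.norm_exp]
    simp
  have hmem : ∀ n : ℕ, ρ^n * z₀ ∈ Metric.sphere (0:ℂ) ‖z₀‖ := by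
    intro n
    simp [Metric.mem_sphere, Complex.dist_eq, map_mul, map_pow, habsρ]
  obtain ⟨x, -, φ, hφ, hxt⟩ := (isCompact_sphere (0:ℂ) ‖z₀‖).tendsto_subseq hmem
  set c : ℂ := g z₀ / f z₀ with hcdef
  have hkeyn : ∀ n : ℕ, g (ρ^n * z₀) = c * f (ρ^n * z₀) := by
    intro n
    have h := hC n z₀
    rw [hcdef, div_mul_eq_mul_div, eq_div_iff hfx₀]
    linear_combination -h
  have hev : ∀ᶠ k in atTop, ρ^(φ k) * z₀ ≠ x := by
    by_cases hex : ∃ k₀, ρ^(φ k₀) * z₀ = x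
    · obtain ⟨k₀, hk₀⟩ := hex
      filter_upwards [eventually_gt_atTop k₀] with k hk hcon
      have : φ k = φ k₀ := huinj (hcon.trans hk₀.symm)
      have hk' := hφ.injective this
      omega
    · push_neg at hex
      filter_upwards with k using hex _
  have hxt' : Tendsto (fun k => ρ^(φ k) * z₀) atTop (𝓝[≠] x) := by
    rw [tendsto_nhdsWithin_iff]
    refine ⟨hxt, hev.mono fun k hk => ?_⟩
    simpa using hk
  have hfr : ∃ᶠ z in 𝓝[≠] x, g z = c * f z :=
    hxt'.frequently (Frequently.of_forall fun k => hkeyn (φ k))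
  have hgf : g = fun z => c * f z :=
    entireEqOfFrequently hg (hf.const_mul c) x hfr
  refine ⟨c, ?_, hgf⟩
  rw [hcdef, norm_div]
  have h1 : ‖g z₀‖ = ‖f z₀‖ := heq1 x₀
  rw [h1, div_self (norm_ne_zero_iff.mpr hfx₀)]
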